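/- arXiv:2303.11843 — 6 statements merged into one kernel-verified Lean document; each statement's English description precedes it below -/
import Mathlib

section
/- Let ε > 0, let (X,d) be a metric space, P ⊆ X a finite nonempty set, r > 0, and k ≥ 1 an integer. Suppose I is a maximal independent set of the r-threshold graph of P with |I| ≤ k, and that the (r/(1+ε/2))-threshold graph of P contains an independent set of size k+1. Then max_{p ∈ P} min_{c ∈ I} d(p,c) ≤ r and r ≤ (2+ε)·OPT_k(P); in particular the k-center cost of I on P is at most (2+ε)·OPT_k(P). -/
/-- The `k`-center cost of a nonempty finite set `C` of centers on a nonempty finite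
set `P` of points: `max_{p ∈ P} min_{c ∈ C} d(p,c)`. -/
noncomputable def kCenterCost {X : Type*} [MetricSpace X] (P C : Finset X)
    (hP : P.Nonempty) (hC : C.Nonempty) : ℝ :=
  P.sup' hP fun p => C.inf' hC fun c => dist p c

/-- The optimal `k`-center cost of `P`: the infimum of the `k`-center cost over all
nonempty finite sets `C ⊆ X` with `|C| ≤ k`. -/
noncomputable def kCenterOpt {X : Type*} [MetricSpace X] (P : Finset X)
    (hP : P.Nonempty) (k : ℕ) : ℝ :=
  sInf {v : ℝ | ∃ (C : Finset X) (hC : C.Nonempty),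
    C.card ≤ k ∧ v = kCenterCost P C hP hC}

/-- Suppose `I` is a maximal independent set of the `r`-threshold graph
of `P` with `|I| ≤ k` (independence: distinct points of `I` are at distance `> r`;
maximality: every point of `P` outside `I` has a point of `I` within distance `r`),
and the `(r/(1+ε/2))`-threshold graph of `P` contains an independent set `J` of size
`k+1` (i.e. `k+1` points of `P` with pairwise distances `> r/(1+ε/2)`). Then the
`k`-center cost of `I` on `P` is at most `r`, and `r ≤ (2+ε) · OPT_k(P)`; in
particular the `k`-center cost of `I` on `P` is at most `(2+ε) · OPT_k(P)`. -/
theorem stmt_2 {X : Type*} [MetricSpace X] (ε : ℝ) (hε : 0 < ε)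
    (P : Finset X) (hP : P.Nonempty) (r : ℝ) (hr : 0 < r) (k : ℕ) (hk : 1 ≤ k)
    (I : Finset X) (hIP : I ⊆ P)
    (hindep : ∀ x ∈ I, ∀ y ∈ I, x ≠ y → r < dist x y)
    (hmax : ∀ p ∈ P, p ∉ I → ∃ c ∈ I, dist p c ≤ r)
    (hIcard : I.card ≤ k)
    (J : Finset X) (hJP : J ⊆ P) (hJcard : J.card = k + 1)
    (hJindep : ∀ x ∈ J, ∀ y ∈ J, x ≠ y → r / (1 + ε / 2) < dist x y) :
    ∃ hIne : I.Nonempty,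
      kCenterCost P I hP hIne ≤ r ∧
      r ≤ (2 + ε) * kCenterOpt P hP k ∧
      kCenterCost P I hP hIne ≤ (2 + ε) * kCenterOpt P hP k := by
  have h2ε : (0:ℝ) < 2 + ε := by linarith
  have hIne : I.Nonempty := by
    obtain ⟨p, hp⟩ := hP
    by_cases h : p ∈ I
    · exact ⟨p, h⟩
    · obtain ⟨c, hc, -⟩ := hmax p hp h
      exact ⟨c, hc⟩
  have hcost : kCenterCost P I hP hIne ≤ r := by
    apply Finset.sup'_le
    intro p hp
    by_cases h : p ∈ I
    · exact le_trans (Finset.inf'_le _ h) (by simp [hr.le])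
    · obtain ⟨c, hc, hd⟩ := hmax p hp h
      exact le_trans (Finset.inf'_le _ hc) hd
  have hlb : ∀ v ∈ {v : ℝ | ∃ (C : Finset X) (hC : C.Nonempty),
      C.card ≤ k ∧ v = kCenterCost P C hP hC}, r / (2 + ε) ≤ v := by
    rintro v ⟨C, hC, hCcard, rfl⟩
    have hnear : ∀ x ∈ J, ∃ c ∈ C, dist x c ≤ kCenterCost P C hP hC := by
      intro x hx
      obtain ⟨c, hc, hceq⟩ := Finset.exists_mem_eq_inf' hC (fun c => dist x c)
      refine ⟨c, hc, ?_⟩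
      rw [← hceq]
      exact Finset.le_sup' (f := fun p => C.inf' hC fun c => dist p c) (hJP hx)
    choose f hfC hfd using hnear
    have hmaps : ∀ x ∈ J.attach, f x.1 x.2 ∈ C := fun x _ => hfC x.1 x.2
    have hcard : C.card < J.attach.card := by
      rw [Finset.card_attach, hJcard]; omega
    obtain ⟨x, _, y, _, hxy, hfeq⟩ :=
      Finset.exists_ne_map_eq_of_card_lt_of_maps_to hcard hmaps
    have hne : x.1 ≠ y.1 := fun h => hxy (Subtype.ext h)
    have hd := hJindep x.1 x.2 y.1 y.2 hne
    have htri : dist x.1 y.1 ≤ dist x.1 (f x.1 x.2) + dist y.1 (f y.1 y.2) := by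
      rw [hfeq]
      calc dist x.1 y.1 ≤ dist x.1 (f y.1 y.2) + dist (f y.1 y.2) y.1 :=
            dist_triangle _ _ _
        _ = _ := by rw [dist_comm (f y.1 y.2) y.1]
    have h1 := hfd x.1 x.2
    have h2 := hfd y.1 y.2
    have hpos : (0:ℝ) < 1 + ε / 2 := by linarith
    rw [div_lt_iff₀ hpos] at hd
    rw [div_le_iff₀ h2ε]
    nlinarith
  have hset_ne : {v : ℝ | ∃ (C : Finset X) (hC : C.Nonempty),
      C.card ≤ k ∧ v = kCenterCost P C hP hC}.Nonempty := by
    obtain ⟨p, hp⟩ := hP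
    exact ⟨_, ⟨{p}, ⟨p, Finset.mem_singleton_self p⟩, by simpa using hk, rfl⟩⟩
  have hopt : r / (2 + ε) ≤ kCenterOpt P hP k := le_csInf hset_ne hlb
  have hr2 : r ≤ (2 + ε) * kCenterOpt P hP k := by
    rw [div_le_iff₀ h2ε] at hopt
    linarith [hopt]
  exact ⟨hIne, hcost, hr2, hcost.trans hr2⟩
end

section
/- Let (X,d) be a metric space, P ⊆ X finite, k ≥ 1 an integer, and r > 0. Let C' ⊆ X with 1 ≤ |C'| ≤ k be such that max_{p ∈ P} min_{c ∈ C'} d(p,c) ≤ r/2, and let H be the simple graph on C' joining distinct x, y when d(x,y) ≤ 2r. Suppose C ⊆ X is a nonempty set such that for every p ∈ P there exist q ∈ C and c_p, c_q ∈ C' with d(p,c_p) ≤ r/2, d(q,c_q) ≤ r/2, and c_p and c_q in the same connected component of H. Then max_{p ∈ P} min_{c ∈ C} d(p,c) ≤ 2kr. -/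
/-- The simple graph on a finite center set `C'` joining two distinct centers whenever
their distance is at most `2r`. -/
def closeGraph {X : Type*} [MetricSpace X] (C' : Finset X) (r : ℝ) :
    SimpleGraph {x // x ∈ C'} where
  Adj x y := x ≠ y ∧ dist (x : X) (y : X) ≤ 2 * r
  symm := by
    constructor
    intro x y hxy
    exact ⟨hxy.1.symm, by rw [dist_comm]; exact hxy.2⟩
  loopless := by
    constructor
    intro x hx
    exact hx.1 rfl

lemma walk_dist_le {X : Type*} [MetricSpace X] (C' : Finset X) (r : ℝ) (hr : 0 ≤ r)
    {u v : {x // x ∈ C'}} (w : (closeGraph C' r).Walk u v) :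
    dist (u : X) (v : X) ≤ 2 * r * w.length := by
  induction w with
  | nil => simp
  | cons h p ih =>
    rename_i a b c
    calc dist (a : X) (c : X) ≤ dist (a : X) (b : X) + dist (b : X) (c : X) :=
          dist_triangle _ _ _
      _ ≤ 2 * r + 2 * r * p.length := add_le_add h.2 ih
      _ = 2 * r * ((SimpleGraph.Walk.cons h p).length) := by
          simp [SimpleGraph.Walk.length_cons]; push_cast; ring

/-- Let `C'` be a set of at most `k` (and at least one) centers whose
`k`-center cost on the finite set `P` is at most `r/2`, and let `H` be the graph on
`C'` joining distinct centers at distance at most `2r`. If `C` is a nonempty set such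
that every `p ∈ P` has a representative `q ∈ C` lying in its super cluster — i.e.
there are `c_p, c_q ∈ C'` with `d(p,c_p) ≤ r/2`, `d(q,c_q) ≤ r/2`, and `c_p, c_q` in
the same connected component of `H` — then the `k`-center cost of `C` on `P` is at
most `2kr`, i.e. `max_{p ∈ P} min_{c ∈ C} d(p,c) ≤ 2kr`. -/
theorem stmt_6 {X : Type*} [MetricSpace X] (P : Finset X) (k : ℕ) (hk : 1 ≤ k)
    (r : ℝ) (hr : 0 < r) (C' : Finset X) (hC'lo : 1 ≤ C'.card) (hC'hi : C'.card ≤ k)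
    (hcover : ∀ p ∈ P, ∃ c ∈ C', dist p c ≤ r / 2)
    (C : Set X) (hC : C.Nonempty)
    (hrep : ∀ p ∈ P, ∃ q ∈ C, ∃ cp cq : {x // x ∈ C'},
        dist p (cp : X) ≤ r / 2 ∧ dist q (cq : X) ≤ r / 2 ∧
        (closeGraph C' r).Reachable cp cq) :
    ∀ p ∈ P, ∃ c ∈ C, dist p c ≤ 2 * k * r := by
  intro p hp
  obtain ⟨q, hq, cp, cq, hpc, hqc, hreach⟩ := hrep p hp
  refine ⟨q, hq, ?_⟩
  obtain ⟨w⟩ := hreach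
  haveI : DecidableEq {x // x ∈ C'} := Classical.decEq _
  have hcard : Fintype.card {x // x ∈ C'} = C'.card := Fintype.card_coe C'
  have hlen : w.bypass.length ≤ k - 1 := by
    have := w.bypass_isPath.length_lt
    omega
  have hdist : dist (cp : X) (cq : X) ≤ 2 * r * (k - 1 : ℕ) := by
    calc dist (cp : X) (cq : X) ≤ 2 * r * w.bypass.length :=
          walk_dist_le C' r hr.le _
      _ ≤ 2 * r * (k - 1 : ℕ) := by
          apply mul_le_mul_of_nonneg_left _ (by linarith)
          exact_mod_cast hlen
  have hk1 : ((k - 1 : ℕ) : ℝ) = (k : ℝ) - 1 := by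
    have : (1 : ℕ) ≤ k := hk
    push_cast [Nat.cast_sub this]; ring
  calc dist p q ≤ dist p (cp : X) + dist (cp : X) (cq : X) + dist (cq : X) q := by
        have := dist_triangle4 p (cp : X) (cq : X) q
        linarith
    _ ≤ r / 2 + 2 * r * (k - 1 : ℕ) + r / 2 := by
        have : dist (cq : X) q ≤ r / 2 := by rw [dist_comm]; exact hqc
        linarith
    _ ≤ 2 * k * r := by rw [hk1]; nlinarith [(Nat.one_le_cast (α := ℝ)).mpr hk]
end

section
/- Let (X,d) be a metric space, P ⊆ X a finite set, z ≥ 0, and y : P → ℝ with y_p ≥ 0 for all p. Let S̄ be a finite set of pairs (p,r) with p ∈ P and r > 0 such that: (i) for every (p,r) ∈ S̄, Σ_{p' ∈ P, d(p,p') ≤ r/3} y_{p'} ≥ r/6 + z; and (ii) for distinct pairs (p,r), (p',r') ∈ S̄, the sets {q ∈ P : d(p,q) ≤ r/3} and {q ∈ P : d(p',q) ≤ r'/3} are disjoint. Then Σ_{(p,r) ∈ S̄} (r + z) ≤ 6 · Σ_{p ∈ P} y_p. -/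
open Finset
open scoped Classical

/-- primal-dual cost bound core: let `y` be nonnegative dual variables
on the finite point set `P`, `z ≥ 0`, and let `S̄` be a finite set of pairs `(p,r)`
with `p ∈ P` and `r > 0` such that (i) each pair is half-tight at radius `r/3`:
`Σ_{p' ∈ P, d(p,p') ≤ r/3} y_{p'} ≥ r/6 + z`, and (ii) the balls
`{q ∈ P : d(p,q) ≤ r/3}` of distinct pairs are disjoint. Then
`Σ_{(p,r) ∈ S̄} (r + z) ≤ 6 · Σ_{p ∈ P} y_p`. -/
theorem stmt_7 {X : Type*} [MetricSpace X] (P : Finset X) (z : ℝ) (hz : 0 ≤ z)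
    (y : X → ℝ) (hy : ∀ p ∈ P, 0 ≤ y p)
    (Sbar : Finset (X × ℝ))
    (hSmem : ∀ s ∈ Sbar, s.1 ∈ P ∧ 0 < s.2)
    (htight : ∀ s ∈ Sbar,
      s.2 / 6 + z ≤ ∑ p' ∈ P.filter (fun p' => dist s.1 p' ≤ s.2 / 3), y p')
    (hdisj : ∀ s ∈ Sbar, ∀ s' ∈ Sbar, s ≠ s' →
      ∀ q ∈ P, ¬(dist s.1 q ≤ s.2 / 3 ∧ dist s'.1 q ≤ s'.2 / 3)) :
    ∑ s ∈ Sbar, (s.2 + z) ≤ 6 * ∑ p ∈ P, y p := by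
  have key : ∑ s ∈ Sbar, ∑ p' ∈ P.filter (fun p' => dist s.1 p' ≤ s.2 / 3), y p'
      ≤ ∑ p ∈ P, y p := by
    rw [← Finset.sum_biUnion]
    · apply Finset.sum_le_sum_of_subset_of_nonneg
      · intro p hp
        simp only [Finset.mem_biUnion, Finset.mem_filter] at hp
        obtain ⟨s, _, hp, _⟩ := hp
        exact hp
      · intro p hp _
        exact hy p hp
    · intro s hs s' hs' hne
      simp only [Function.onFun]
      rw [Finset.disjoint_filter]
      intro q hq h1 h2
      exact hdisj s hs s' hs' hne q hq ⟨h1, h2⟩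
  calc ∑ s ∈ Sbar, (s.2 + z) ≤ ∑ s ∈ Sbar, 6 * (s.2 / 6 + z) := by
        apply Finset.sum_le_sum
        intro s _
        linarith
    _ ≤ ∑ s ∈ Sbar, 6 * ∑ p' ∈ P.filter (fun p' => dist s.1 p' ≤ s.2 / 3), y p' := by
        apply Finset.sum_le_sum
        intro s hs
        linarith [htight s hs]
    _ = 6 * ∑ s ∈ Sbar, ∑ p' ∈ P.filter (fun p' => dist s.1 p' ≤ s.2 / 3), y p' := by
        rw [Finset.mul_sum]
    _ ≤ 6 * ∑ p ∈ P, y p := by linarith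
end

section
/- Let X be a nonempty finite set and let A, B be nonempty subsets of X. If π is drawn uniformly at random from the bijections X → {1, …, |X|}, and argmin_S π denotes the unique element of S minimizing π, then the probability that argmin_{a ∈ A} π(a) = argmin_{b ∈ B} π(b) equals |A ∩ B| / |A ∪ B|. -/
/-- For a bijection `π` from a finite type `X` to `Fin |X|` and a nonempty `A ⊆ X`,
`finArgmin π A hA` is the unique element of `A` minimizing `π`. -/
def finArgmin {X : Type*} [Fintype X] [DecidableEq X]
    (π : X ≃ Fin (Fintype.card X)) (A : Finset X) (hA : A.Nonempty) : X :=
  π.symm ((A.image fun a => π a).min' (hA.image fun a => π a))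

section aux

variable {X : Type*} [Fintype X] [DecidableEq X]

lemma finArgmin_mem (π : X ≃ Fin (Fintype.card X)) (A : Finset X) (hA : A.Nonempty) :
    finArgmin π A hA ∈ A := by
  have h := (A.image fun a => π a).min'_mem (hA.image fun a => π a)
  rw [Finset.mem_image] at h
  obtain ⟨a, ha, hpa⟩ := h
  simpa [finArgmin, ← hpa] using ha

lemma finArgmin_le (π : X ≃ Fin (Fintype.card X)) (A : Finset X) (hA : A.Nonempty)
    {a : X} (ha : a ∈ A) : π (finArgmin π A hA) ≤ π a := by
  simpa [finArgmin] using (A.image fun a => π a).min'_le _ (Finset.mem_image_of_mem _ ha)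

lemma finArgmin_eq_iff (π : X ≃ Fin (Fintype.card X)) (A : Finset X) (hA : A.Nonempty)
    (x : X) : finArgmin π A hA = x ↔ x ∈ A ∧ ∀ a ∈ A, π x ≤ π a := by
  constructor
  · rintro rfl
    exact ⟨finArgmin_mem π A hA, fun a ha => finArgmin_le π A hA ha⟩
  · rintro ⟨hx, hle⟩
    exact π.injective (le_antisymm (finArgmin_le π A hA hx)
      (hle _ (finArgmin_mem π A hA)))

lemma finArgmin_union_iff (π : X ≃ Fin (Fintype.card X)) (A B : Finset X)
    (hA : A.Nonempty) (hB : B.Nonempty) (hC : (A ∪ B).Nonempty) :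
    finArgmin π A hA = finArgmin π B hB ↔ finArgmin π (A ∪ B) hC ∈ A ∩ B := by
  constructor
  · intro h
    have hmA := finArgmin_mem π A hA
    have hmB : finArgmin π A hA ∈ B := h ▸ finArgmin_mem π B hB
    have : finArgmin π (A ∪ B) hC = finArgmin π A hA := by
      rw [finArgmin_eq_iff]
      refine ⟨Finset.mem_union_left _ hmA, fun c hc => ?_⟩
      rcases Finset.mem_union.1 hc with h' | h'
      · exact finArgmin_le π A hA h'
      · rw [h]; exact finArgmin_le π B hB h'
    rw [this, Finset.mem_inter]
    exact ⟨hmA, hmB⟩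
  · intro h
    rw [Finset.mem_inter] at h
    have hle : ∀ c ∈ A ∪ B, π (finArgmin π (A ∪ B) hC) ≤ π c :=
      fun c hc => finArgmin_le π (A ∪ B) hC hc
    have h1 : finArgmin π A hA = finArgmin π (A ∪ B) hC := by
      rw [finArgmin_eq_iff]
      exact ⟨h.1, fun a ha => hle a (Finset.mem_union_left _ ha)⟩
    have h2 : finArgmin π B hB = finArgmin π (A ∪ B) hC := by
      rw [finArgmin_eq_iff]
      exact ⟨h.2, fun a ha => hle a (Finset.mem_union_right _ ha)⟩
    rw [h1, h2]

lemma finArgmin_swap (π : X ≃ Fin (Fintype.card X)) (C : Finset X) (hC : C.Nonempty)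
    {x y : X} (hx : x ∈ C) (hy : y ∈ C) :
    finArgmin ((Equiv.swap x y).trans π) C hC = Equiv.swap x y (finArgmin π C hC) := by
  have hswap : ∀ c ∈ C, Equiv.swap x y c ∈ C := by
    intro c hc
    rcases eq_or_ne c x with rfl | hcx
    · rwa [Equiv.swap_apply_left]
    rcases eq_or_ne c y with rfl | hcy
    · rwa [Equiv.swap_apply_right]
    · rwa [Equiv.swap_apply_of_ne_of_ne hcx hcy]
  rw [finArgmin_eq_iff]
  refine ⟨hswap _ (finArgmin_mem π C hC), fun c hc => ?_⟩
  simp only [Equiv.trans_apply, Equiv.swap_apply_self]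
  exact finArgmin_le π C hC (hswap c hc)

end aux

/-- MinHash collision probability: for nonempty subsets `A, B` of a
nonempty finite set `X`, if `π` is a uniformly random bijection `X → {1,…,|X|}`, the
probability that the `π`-minimizer of `A` equals the `π`-minimizer of `B` is exactly
`|A ∩ B| / |A ∪ B|`. -/
theorem stmt_9 {X : Type*} [Fintype X] [DecidableEq X] [Nonempty X]
    (A B : Finset X) (hA : A.Nonempty) (hB : B.Nonempty) :
    ((Finset.univ.filter fun π : X ≃ Fin (Fintype.card X) =>
        finArgmin π A hA = finArgmin π B hB).card : ℝ) /
      (Fintype.card (X ≃ Fin (Fintype.card X)) : ℝ)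
      = ((A ∩ B).card : ℝ) / ((A ∪ B).card : ℝ) := by
  classical
  have hC : (A ∪ B).Nonempty := hA.mono Finset.subset_union_left
  set C := A ∪ B with hCdef
  set N : X → ℕ := fun x => (Finset.univ.filter fun π : X ≃ Fin (Fintype.card X) =>
      finArgmin π C hC = x).card with hN
  -- N is constant on C
  have hNconst : ∀ x ∈ C, ∀ y ∈ C, N x = N y := by
    intro x hx y hy
    apply Finset.card_bij' (fun π _ => (Equiv.swap x y).trans π)
      (fun π _ => (Equiv.swap x y).trans π)
    · intro π hπ
      simp only [Finset.mem_filter, Finset.mem_univ, true_and] at hπ ⊢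
      rw [finArgmin_swap π C hC hx hy, hπ, Equiv.swap_apply_left]
    · intro π hπ
      simp only [Finset.mem_filter, Finset.mem_univ, true_and] at hπ ⊢
      rw [finArgmin_swap π C hC hx hy, hπ, Equiv.swap_apply_right]
    · intro π _
      ext s
      simp
    · intro π _
      ext s
      simp
  obtain ⟨x0, hx0⟩ := id hC
  -- total count
  have htotal : Fintype.card (X ≃ Fin (Fintype.card X)) = C.card * N x0 := by
    rw [← Finset.card_univ]
    rw [Finset.card_eq_sum_card_fiberwise
      (f := fun π : X ≃ Fin (Fintype.card X) => finArgmin π C hC) (t := C)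
      (fun π _ => finArgmin_mem π C hC)]
    rw [Finset.sum_congr rfl (fun x hx => hNconst x hx x0 hx0)]
    simp [mul_comm]
  -- numerator count
  have hnum : (Finset.univ.filter fun π : X ≃ Fin (Fintype.card X) =>
      finArgmin π A hA = finArgmin π B hB).card = (A ∩ B).card * N x0 := by
    have hfilt : (Finset.univ.filter fun π : X ≃ Fin (Fintype.card X) =>
        finArgmin π A hA = finArgmin π B hB)
        = Finset.univ.filter fun π => finArgmin π C hC ∈ A ∩ B := by
      apply Finset.filter_congr
      intro π _
      exact finArgmin_union_iff π A B hA hB hC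
    rw [hfilt]
    rw [Finset.card_eq_sum_card_fiberwise
      (f := fun π : X ≃ Fin (Fintype.card X) => finArgmin π C hC) (t := A ∩ B)
      (s := Finset.univ.filter fun π => finArgmin π C hC ∈ A ∩ B)
      (fun π hπ => (Finset.mem_filter.1 hπ).2)]
    have : ∀ x ∈ A ∩ B,
        ((Finset.univ.filter fun π : X ≃ Fin (Fintype.card X) =>
          finArgmin π C hC ∈ A ∩ B).filter fun π => finArgmin π C hC = x).card = N x0 := by
      intro x hx
      have hxC : x ∈ C := Finset.mem_union_left _ (Finset.mem_inter.1 hx).1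
      rw [Finset.filter_filter]
      have : (Finset.univ.filter fun π : X ≃ Fin (Fintype.card X) =>
          finArgmin π C hC ∈ A ∩ B ∧ finArgmin π C hC = x)
          = Finset.univ.filter fun π => finArgmin π C hC = x := by
        apply Finset.filter_congr
        intro π _
        constructor
        · exact fun h => h.2
        · intro h; exact ⟨h ▸ hx, h⟩
      rw [this]
      exact hNconst x hxC x0 hx0
    rw [Finset.sum_congr rfl this]
    simp [mul_comm]
  have hcardpos : 0 < Fintype.card (X ≃ Fin (Fintype.card X)) :=
    Fintype.card_pos_iff.2 ⟨Fintype.equivFin X⟩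
  have hN0 : N x0 ≠ 0 := by
    intro h
    rw [htotal, h, mul_zero] at hcardpos
    exact lt_irrefl 0 hcardpos
  rw [hnum, htotal]
  push_cast
  rw [mul_div_mul_right _ _ (by exact_mod_cast hN0)]
end

section
/- Let (X,d) be a metric space, P ⊆ X a finite set with |P| = n ≥ 2, r > 0, c ≥ 1, and 0 < p₂ ≤ p₁ < 1. Let μ be a probability measure on functions h : X → U such that for all x, y ∈ X: if d(x,y) ≤ r then μ{h : h(x) = h(y)} ≥ p₁, and if d(x,y) > c·r then μ{h : h(x) = h(y)} ≤ p₂. Set t = ⌈2·ln n / ln(1/p₂)⌉, ρ = ln(1/p₁)/ln(1/p₂), and let δ ∈ (0,1/2) and s ≥ ln(n²/δ)·n^{2ρ}/p₁ be an integer. Draw s·t i.i.d. functions h_{i,j} ~ μ (i ∈ [s], j ∈ [t]) and say a pair x, y ∈ P collides in block i if h_{i,j}(x) = h_{i,j}(y) for all j ∈ [t]. Then: (a) for each fixed i and each pair x, y ∈ P with d(x,y) > c·r, the probability that x and y collide in block i is at most p₂^t ≤ 1/n², so the expected number of such far pairs colliding in block i is less than 1; and (b) with probability at least 1 − δ, every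 pair x, y ∈ P with d(x,y) ≤ r collides in at least one block. -/
open MeasureTheory Set
open scoped ENNReal

lemma my_uncurry_mp {ι κ H : Type*} [Fintype ι] [Fintype κ] [MeasurableSpace H]
    (μ : Measure H) [IsProbabilityMeasure μ] :
    MeasurePreserving (fun (g : ι → κ → H) (p : ι × κ) => g p.1 p.2)
      (Measure.pi fun _ : ι => Measure.pi fun _ : κ => μ)
      (Measure.pi fun _ : ι × κ => μ) := by
  have hf : Measurable (fun (g : ι → κ → H) (p : ι × κ) => g p.1 p.2) :=
    measurable_pi_lambda _ fun p => (measurable_pi_apply p.2).comp (measurable_pi_apply p.1)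
  refine ⟨hf, ?_⟩
  refine (Measure.pi_eq fun A hA => ?_).symm
  rw [Measure.map_apply hf (MeasurableSet.univ_pi hA)]
  have hpre : (fun (g : ι → κ → H) (p : ι × κ) => g p.1 p.2) ⁻¹' (Set.pi univ A)
      = Set.pi univ (fun i => Set.pi univ (fun j => A (i, j))) := by
    ext g
    simp [Set.mem_pi, Prod.forall]
  rw [hpre, Measure.pi_pi]
  simp_rw [Measure.pi_pi]
  rw [Fintype.prod_prod_type]

lemma my_pi_eval_preimage {ι H : Type*} [Fintype ι] [MeasurableSpace H]
    (ν : Measure H) [IsProbabilityMeasure ν] [DecidableEq ι] (i : ι) (B : Set H) :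
    Measure.pi (fun _ : ι => ν) (Function.eval i ⁻¹' B) = ν B := by
  rw [← Set.univ_pi_update_univ, Measure.pi_pi]
  rw [Finset.prod_eq_single_of_mem i (Finset.mem_univ i)]
  · rw [Function.update_self]
  · intro b _ hb
    rw [Function.update_of_ne hb]
    simp

set_option maxHeartbeats 1000000 in
/-- Let `μ` be an `(r, cr, p₁, p₂)`-sensitive family of hash functions
`X → U` (a probability measure on functions: points at distance `≤ r` collide with
probability `≥ p₁`, points at distance `> cr` collide with probability `≤ p₂`), with
`0 < p₂ ≤ p₁ < 1`. Set `t = ⌈2 ln n / ln(1/p₂)⌉`, `ρ = ln(1/p₁)/ln(1/p₂)`, and let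
`δ ∈ (0,1/2)` and `s ≥ ln(n²/δ)·n^{2ρ}/p₁`. Draw `s·t` i.i.d. hash functions
`ω (i,j)` (the product measure `Measure.pi`), and say `x, y` collide in block `i` if
`ω (i,j) x = ω (i,j) y` for all `j`. Then:
(a) for each block `i` and each pair `x, y ∈ P` with `d(x,y) > c·r`, the probability
that `x,y` collide in block `i` is at most `p₂^t ≤ 1/n²`, and the expected number of
far pairs colliding in block `i` is less than `1`;
(b) with probability at least `1 − δ`, every pair `x, y ∈ P` with `d(x,y) ≤ r`
collides in at least one block. -/
theorem stmt_11 {X U : Type*} [MetricSpace X] [MeasurableSpace U]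
    (P : Finset X) (n : ℕ) (hcard : P.card = n) (hn : 2 ≤ n)
    (r : ℝ) (hr : 0 < r) (c : ℝ) (hc : 1 ≤ c)
    (p₁ p₂ : ℝ) (hp₂pos : 0 < p₂) (hp₂₁ : p₂ ≤ p₁) (hp₁lt : p₁ < 1)
    (μ : Measure (X → U)) [IsProbabilityMeasure μ]
    (hmeas : ∀ x y : X, MeasurableSet {h : X → U | h x = h y})
    (hclose : ∀ x y : X, dist x y ≤ r →
      ENNReal.ofReal p₁ ≤ μ {h : X → U | h x = h y})
    (hfar : ∀ x y : X, c * r < dist x y →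
      μ {h : X → U | h x = h y} ≤ ENNReal.ofReal p₂)
    (t : ℕ) (ht : t = ⌈2 * Real.log n / Real.log (1 / p₂)⌉₊)
    (ρ : ℝ) (hρ : ρ = Real.log (1 / p₁) / Real.log (1 / p₂))
    (δ : ℝ) (hδ0 : 0 < δ) (hδhalf : δ < 1 / 2)
    (s : ℕ) (hs : Real.log ((n : ℝ) ^ 2 / δ) * (n : ℝ) ^ (2 * ρ) / p₁ ≤ (s : ℝ)) :
    (∀ i : Fin s, ∀ x ∈ P, ∀ y ∈ P, c * r < dist x y →
        (Measure.pi fun _ : Fin s × Fin t => μ)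
            {ω : Fin s × Fin t → X → U | ∀ j : Fin t, ω (i, j) x = ω (i, j) y}
          ≤ ENNReal.ofReal (p₂ ^ t)
        ∧ p₂ ^ t ≤ 1 / (n : ℝ) ^ 2) ∧
    (∀ i : Fin s,
        (∑ x ∈ P, ∑ y ∈ P,
          if c * r < dist x y then
            (Measure.pi fun _ : Fin s × Fin t => μ)
              {ω : Fin s × Fin t → X → U | ∀ j : Fin t, ω (i, j) x = ω (i, j) y}
          else 0) < 1) ∧
    ENNReal.ofReal (1 - δ) ≤
      (Measure.pi fun _ : Fin s × Fin t => μ)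
        {ω : Fin s × Fin t → X → U | ∀ x ∈ P, ∀ y ∈ P, dist x y ≤ r →
          ∃ i : Fin s, ∀ j : Fin t, ω (i, j) x = ω (i, j) y} := by
  classical
  -- basic positivity facts
  have hp₁pos : 0 < p₁ := lt_of_lt_of_le hp₂pos hp₂₁
  have hp₂lt1 : p₂ < 1 := lt_of_le_of_lt hp₂₁ hp₁lt
  have hn1 : (1 : ℝ) < n := by exact_mod_cast lt_of_lt_of_le one_lt_two hn
  have hnpos : (0 : ℝ) < n := lt_trans one_pos hn1
  set L2 := Real.log (1 / p₂) with hL2def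
  set L1 := Real.log (1 / p₁) with hL1def
  have hL2 : 0 < L2 := Real.log_pos ((one_lt_div hp₂pos).mpr hp₂lt1)
  have hL1 : 0 ≤ L1 := Real.log_nonneg ((one_le_div hp₁pos).mpr hp₁lt.le)
  have hlogp₂ : Real.log p₂ = -L2 := by
    rw [hL2def, one_div, Real.log_inv, neg_neg]
  have hlogp₁ : Real.log p₁ = -L1 := by
    rw [hL1def, one_div, Real.log_inv, neg_neg]
  have hlogn : 0 < Real.log n := Real.log_pos hn1
  -- real arithmetic (a): p₂^t ≤ 1/n²
  have hp2t : p₂ ^ t = Real.exp (-((t : ℝ) * L2)) := by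
    rw [← Real.exp_log hp₂pos, ← Real.exp_nat_mul, hlogp₂]
    ring_nf
  have htlb : 2 * Real.log n / L2 ≤ (t : ℝ) := ht ▸ Nat.le_ceil _
  have h2ln : 2 * Real.log n ≤ (t : ℝ) * L2 := (div_le_iff₀ hL2).mp htlb
  have ra : p₂ ^ t ≤ 1 / (n : ℝ) ^ 2 := by
    rw [hp2t]
    have h1 : Real.exp (-((t : ℝ) * L2)) ≤ Real.exp (-(2 * Real.log n)) :=
      Real.exp_le_exp.mpr (by linarith)
    have h2 : Real.exp (-(2 * Real.log n)) = 1 / (n : ℝ) ^ 2 := by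
      rw [show (2 : ℝ) * Real.log n = Real.log ((n : ℝ) ^ 2) by
            rw [Real.log_pow]; push_cast; ring,
          Real.exp_neg, Real.exp_log (by positivity), one_div]
    linarith
  -- real arithmetic (b): (1 - p₁^t)^s ≤ δ/n²
  have hq1 : p₁ ^ t ≤ 1 := pow_le_one₀ hp₁pos.le hp₁lt.le
  have hqpos : 0 < p₁ ^ t := pow_pos hp₁pos t
  have hNpos : 0 < (n : ℝ) ^ (2 * ρ) := Real.rpow_pos_of_pos hnpos _
  have htub : (t : ℝ) ≤ 2 * Real.log n / L2 + 1 := by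
    rw [ht]
    exact (Nat.ceil_lt_add_one (div_nonneg (by linarith) hL2.le)).le
  have hqlb : p₁ * ((n : ℝ) ^ (2 * ρ))⁻¹ ≤ p₁ ^ t := by
    have hp1t : p₁ ^ t = Real.exp (-((t : ℝ) * L1)) := by
      rw [← Real.exp_log hp₁pos, ← Real.exp_nat_mul, hlogp₁]; ring_nf
    have h1 : (t : ℝ) * L1 ≤ (2 * Real.log n / L2 + 1) * L1 :=
      mul_le_mul_of_nonneg_right htub hL1
    have h2 : (2 * Real.log n / L2 + 1) * L1 = 2 * ρ * Real.log n + L1 := by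
      rw [hρ]; field_simp
    have h3 : Real.exp (-(2 * ρ * Real.log n + L1)) ≤ Real.exp (-((t : ℝ) * L1)) :=
      Real.exp_le_exp.mpr (by linarith)
    have h4 : Real.exp (-(2 * ρ * Real.log n + L1))
        = p₁ * ((n : ℝ) ^ (2 * ρ))⁻¹ := by
      rw [show -(2 * ρ * Real.log n + L1) = -L1 + -(2 * ρ * Real.log n) by ring,
          Real.exp_add, ← hlogp₁, Real.exp_log hp₁pos, Real.exp_neg]
      congr 1
      rw [Real.rpow_def_of_pos hnpos]
      ring_nf
    rw [hp1t, ← h4]; exact h3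
  have hLd : 0 < Real.log ((n : ℝ) ^ 2 / δ) := by
    apply Real.log_pos
    rw [lt_div_iff₀ hδ0]
    nlinarith
  have hsq : Real.log ((n : ℝ) ^ 2 / δ) ≤ (s : ℝ) * p₁ ^ t := by
    have hmul : Real.log ((n : ℝ) ^ 2 / δ) * (n : ℝ) ^ (2 * ρ) / p₁
          * (p₁ * ((n : ℝ) ^ (2 * ρ))⁻¹) ≤ (s : ℝ) * p₁ ^ t :=
      mul_le_mul hs hqlb (by positivity) (Nat.cast_nonneg s)
    have heq : Real.log ((n : ℝ) ^ 2 / δ) * (n : ℝ) ^ (2 * ρ) / p₁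
          * (p₁ * ((n : ℝ) ^ (2 * ρ))⁻¹) = Real.log ((n : ℝ) ^ 2 / δ) := by
      field_simp
    linarith
  have rb : (1 - p₁ ^ t) ^ s ≤ δ / (n : ℝ) ^ 2 := by
    have h1 : 1 - p₁ ^ t ≤ Real.exp (-(p₁ ^ t)) := by
      have := Real.add_one_le_exp (-(p₁ ^ t)); linarith
    have h2 : (1 - p₁ ^ t) ^ s ≤ Real.exp (-(p₁ ^ t)) ^ s :=
      pow_le_pow_left₀ (by linarith) h1 s
    have h3 : Real.exp (-(p₁ ^ t)) ^ s = Real.exp (-((s : ℝ) * p₁ ^ t)) := by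
      rw [← Real.exp_nat_mul]; ring_nf
    have h4 : Real.exp (-((s : ℝ) * p₁ ^ t)) ≤ Real.exp (-(Real.log ((n : ℝ) ^ 2 / δ))) :=
      Real.exp_le_exp.mpr (by linarith)
    have h5 : Real.exp (-(Real.log ((n : ℝ) ^ 2 / δ))) = δ / (n : ℝ) ^ 2 := by
      rw [Real.exp_neg, Real.exp_log (by positivity), inv_div]
    rw [h3] at h2
    linarith
  -- measure-theoretic setup
  set κP := (Measure.pi fun _ : Fin s × Fin t => μ) with hκPdef
  set ν := (Measure.pi fun _ : Fin t => μ) with hνdef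
  have mp := my_uncurry_mp (ι := Fin s) (κ := Fin t) μ
  have hSmeas : ∀ (i : Fin s) (x y : X),
      MeasurableSet {ω : Fin s × Fin t → X → U | ∀ j : Fin t, ω (i, j) x = ω (i, j) y} := by
    intro i x y
    have : {ω : Fin s × Fin t → X → U | ∀ j : Fin t, ω (i, j) x = ω (i, j) y}
        = ⋂ j : Fin t, (fun ω : Fin s × Fin t → X → U => ω (i, j)) ⁻¹' {h | h x = h y} := by
      ext ω; simp
    rw [this]
    exact MeasurableSet.iInter fun j => (measurable_pi_apply (i, j)) (hmeas x y)
  have hBmeas : ∀ x y : X, MeasurableSet {h : Fin t → X → U | ∀ j, h j x = h j y} := by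
    intro x y
    have : {h : Fin t → X → U | ∀ j, h j x = h j y}
        = ⋂ j : Fin t, (fun h : Fin t → X → U => h j) ⁻¹' {h | h x = h y} := by
      ext h; simp
    rw [this]
    exact MeasurableSet.iInter fun j => (measurable_pi_apply j) (hmeas x y)
  have hνB : ∀ x y : X, ν {h : Fin t → X → U | ∀ j, h j x = h j y}
      = μ {h : X → U | h x = h y} ^ t := by
    intro x y
    have : {h : Fin t → X → U | ∀ j, h j x = h j y}
        = Set.pi univ (fun _ : Fin t => {h : X → U | h x = h y}) := by
      ext h; simp [Set.mem_pi]
    rw [hνdef, this, Measure.pi_pi, Finset.prod_const, Finset.card_univ, Fintype.card_fin]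
  have hκS : ∀ (i : Fin s) (x y : X),
      κP {ω : Fin s × Fin t → X → U | ∀ j : Fin t, ω (i, j) x = ω (i, j) y}
        = μ {h : X → U | h x = h y} ^ t := by
    intro i x y
    rw [hκPdef, ← mp.measure_preimage (hSmeas i x y).nullMeasurableSet]
    have : (fun (g : Fin s → Fin t → X → U) (p : Fin s × Fin t) => g p.1 p.2) ⁻¹'
          {ω : Fin s × Fin t → X → U | ∀ j : Fin t, ω (i, j) x = ω (i, j) y}
        = Function.eval i ⁻¹' {h : Fin t → X → U | ∀ j, h j x = h j y} := by
      ext g; simp [Function.eval]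
    rw [this, my_pi_eval_preimage, ← hνdef, hνB]
  -- far pair bound
  have hfarbound : ∀ (i : Fin s) (x y : X), c * r < dist x y →
      κP {ω : Fin s × Fin t → X → U | ∀ j : Fin t, ω (i, j) x = ω (i, j) y}
        ≤ ENNReal.ofReal (p₂ ^ t) := by
    intro i x y hxy
    rw [hκS i x y, ENNReal.ofReal_pow hp₂pos.le]
    exact pow_le_pow_left' (hfar x y hxy) t
  have hcr : 0 < c * r := mul_pos (lt_of_lt_of_le one_pos hc) hr
  refine ⟨fun i x _ y _ hxy => ⟨hfarbound i x y hxy, ra⟩, ?_, ?_⟩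
  · -- expected count < 1
    intro i
    set c1 := ENNReal.ofReal (1 / (n : ℝ) ^ 2) with hc1def
    have hterm_le : ∀ x y : X,
        (if c * r < dist x y then
          κP {ω : Fin s × Fin t → X → U | ∀ j : Fin t, ω (i, j) x = ω (i, j) y}
        else 0) ≤ c1 := by
      intro x y
      by_cases hxy : c * r < dist x y
      · rw [if_pos hxy]
        exact le_trans (hfarbound i x y hxy) (ENNReal.ofReal_le_ofReal ra)
      · rw [if_neg hxy]; exact zero_le
    have hdiag : ∀ x : X,
        (if c * r < dist x x then
          κP {ω : Fin s × Fin t → X → U | ∀ j : Fin t, ω (i, j) x = ω (i, j) x}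
        else 0) = 0 := by
      intro x
      rw [if_neg]
      rw [dist_self]
      exact not_lt.mpr hcr.le
    have hrow : ∀ x ∈ P,
        (∑ y ∈ P, if c * r < dist x y then
          κP {ω : Fin s × Fin t → X → U | ∀ j : Fin t, ω (i, j) x = ω (i, j) y}
        else 0) ≤ (n - 1) • c1 := by
      intro x hx
      rw [← Finset.sum_erase_add P _ hx, hdiag x, add_zero]
      calc (∑ y ∈ P.erase x, if c * r < dist x y then
            κP {ω : Fin s × Fin t → X → U | ∀ j : Fin t, ω (i, j) x = ω (i, j) y}
          else 0) ≤ (P.erase x).card • c1 :=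
            Finset.sum_le_card_nsmul _ _ c1 fun y _ => hterm_le x y
        _ = (n - 1) • c1 := by rw [Finset.card_erase_of_mem hx, hcard]
    calc (∑ x ∈ P, ∑ y ∈ P, if c * r < dist x y then
          κP {ω : Fin s × Fin t → X → U | ∀ j : Fin t, ω (i, j) x = ω (i, j) y}
        else 0) ≤ P.card • ((n - 1) • c1) := Finset.sum_le_card_nsmul _ _ _ hrow
      _ = (n * (n - 1)) • c1 := by rw [hcard, smul_smul]
      _ < 1 := by
          rw [nsmul_eq_mul, hc1def, ← ENNReal.ofReal_natCast,
            ← ENNReal.ofReal_mul (Nat.cast_nonneg _)]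
          apply ENNReal.ofReal_lt_one.mpr
          rw [mul_one_div, div_lt_one (by positivity)]
          have h1 : ((n * (n - 1) : ℕ) : ℝ) = (n : ℝ) * ((n : ℕ) - 1 : ℕ) := by push_cast; ring
          have h2 : (((n : ℕ) - 1 : ℕ) : ℝ) = (n : ℝ) - 1 := by
            have : 1 ≤ n := le_trans one_le_two hn
            push_cast [this]; ring
          rw [h1, h2]
          nlinarith
  · -- part (b)
    set G := {ω : Fin s × Fin t → X → U | ∀ x ∈ P, ∀ y ∈ P, dist x y ≤ r →
        ∃ i : Fin s, ∀ j : Fin t, ω (i, j) x = ω (i, j) y} with hGdef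
    set Bad := fun x y : X => {ω : Fin s × Fin t → X → U |
        ∀ i : Fin s, ¬ ∀ j : Fin t, ω (i, j) x = ω (i, j) y} with hBaddef
    have hBadmeas : ∀ x y : X, MeasurableSet (Bad x y) := by
      intro x y
      have : Bad x y = ⋂ i : Fin s,
          {ω : Fin s × Fin t → X → U | ∀ j : Fin t, ω (i, j) x = ω (i, j) y}ᶜ := by
        ext ω; simp [hBaddef]
      rw [this]
      exact MeasurableSet.iInter fun i => (hSmeas i x y).compl
    have hGmeas : MeasurableSet G := by
      have : G = ⋂ x ∈ (P : Set X), ⋂ y ∈ (P : Set X),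
          {ω : Fin s × Fin t → X → U | dist x y ≤ r →
            ∃ i : Fin s, ∀ j : Fin t, ω (i, j) x = ω (i, j) y} := by
        ext ω; simp [hGdef]
      rw [this]
      refine MeasurableSet.biInter P.countable_toSet fun x _ => ?_
      refine MeasurableSet.biInter P.countable_toSet fun y _ => ?_
      by_cases hd : dist x y ≤ r
      · have : {ω : Fin s × Fin t → X → U | dist x y ≤ r →
            ∃ i : Fin s, ∀ j : Fin t, ω (i, j) x = ω (i, j) y}
            = ⋃ i : Fin s, {ω : Fin s × Fin t → X → U | ∀ j : Fin t,
                ω (i, j) x = ω (i, j) y} := by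
          ext ω; simp [hd]
        rw [this]
        exact MeasurableSet.iUnion fun i => hSmeas i x y
      · have : {ω : Fin s × Fin t → X → U | dist x y ≤ r →
            ∃ i : Fin s, ∀ j : Fin t, ω (i, j) x = ω (i, j) y} = univ := by
          ext ω; simp [hd]
        rw [this]
        exact MeasurableSet.univ
    -- measure of Bad for close pairs
    have hBadbound : ∀ x y : X, dist x y ≤ r →
        κP (Bad x y) ≤ ENNReal.ofReal (δ / (n : ℝ) ^ 2) := by
      intro x y hxy
      have hpre : (fun (g : Fin s → Fin t → X → U) (p : Fin s × Fin t) => g p.1 p.2) ⁻¹'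
            (Bad x y)
          = Set.pi univ (fun _ : Fin s =>
              {h : Fin t → X → U | ∀ j, h j x = h j y}ᶜ) := by
        ext g; simp [hBaddef, Set.mem_pi]
      have hval : κP (Bad x y)
          = (ν {h : Fin t → X → U | ∀ j, h j x = h j y}ᶜ) ^ s := by
        rw [hκPdef, ← mp.measure_preimage (hBadmeas x y).nullMeasurableSet, hpre,
          Measure.pi_pi]
        rw [Finset.prod_const, Finset.card_univ, Fintype.card_fin]
      have hcompl : ν {h : Fin t → X → U | ∀ j, h j x = h j y}ᶜ
          ≤ ENNReal.ofReal (1 - p₁ ^ t) := by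
        rw [prob_compl_eq_one_sub (hBmeas x y), hνB x y]
        have h1 : ENNReal.ofReal (p₁ ^ t) ≤ μ {h : X → U | h x = h y} ^ t := by
          rw [ENNReal.ofReal_pow hp₁pos.le]
          exact pow_le_pow_left' (hclose x y hxy) t
        have h2 : ENNReal.ofReal (1 - p₁ ^ t) = 1 - ENNReal.ofReal (p₁ ^ t) := by
          rw [ENNReal.ofReal_sub _ (pow_nonneg hp₁pos.le t), ENNReal.ofReal_one]
        rw [h2]
        exact tsub_le_tsub_left h1 1
      rw [hval]
      calc (ν {h : Fin t → X → U | ∀ j, h j x = h j y}ᶜ) ^ s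
          ≤ (ENNReal.ofReal (1 - p₁ ^ t)) ^ s := pow_le_pow_left' hcompl s
        _ = ENNReal.ofReal ((1 - p₁ ^ t) ^ s) := by
            rw [ENNReal.ofReal_pow (by linarith)]
        _ ≤ ENNReal.ofReal (δ / (n : ℝ) ^ 2) := ENNReal.ofReal_le_ofReal rb
    -- union bound
    have hsub : Gᶜ ⊆ ⋃ x ∈ P, ⋃ y ∈ P,
        (if dist x y ≤ r then Bad x y else (∅ : Set (Fin s × Fin t → X → U))) := by
      intro ω hω
      simp only [hGdef, mem_compl_iff, mem_setOf_eq] at hω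
      push_neg at hω
      obtain ⟨x, hx, y, hy, hd, hno⟩ := hω
      refine mem_biUnion hx (mem_biUnion hy ?_)
      rw [if_pos hd]
      intro i hall
      obtain ⟨j, hj⟩ := hno i
      exact hj (hall j)
    have hGc : κP Gᶜ ≤ ENNReal.ofReal δ := by
      calc κP Gᶜ ≤ κP (⋃ x ∈ P, ⋃ y ∈ P,
            (if dist x y ≤ r then Bad x y else ∅)) := measure_mono hsub
        _ ≤ ∑ x ∈ P, κP (⋃ y ∈ P, (if dist x y ≤ r then Bad x y else ∅)) :=
            measure_biUnion_finset_le P _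
        _ ≤ ∑ x ∈ P, ∑ y ∈ P, κP (if dist x y ≤ r then Bad x y else ∅) :=
            Finset.sum_le_sum fun x _ => measure_biUnion_finset_le P _
        _ ≤ ∑ x ∈ P, ∑ y ∈ P, ENNReal.ofReal (δ / (n : ℝ) ^ 2) := by
            refine Finset.sum_le_sum fun x _ => Finset.sum_le_sum fun y _ => ?_
            by_cases hd : dist x y ≤ r
            · rw [if_pos hd]; exact hBadbound x y hd
            · rw [if_neg hd]; simp
        _ = (P.card * P.card) • ENNReal.ofReal (δ / (n : ℝ) ^ 2) := by
            rw [Finset.sum_const, Finset.sum_const, smul_smul]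
        _ ≤ ENNReal.ofReal δ := by
            rw [hcard, nsmul_eq_mul, ← ENNReal.ofReal_natCast,
              ← ENNReal.ofReal_mul (Nat.cast_nonneg _)]
            apply ENNReal.ofReal_le_ofReal
            have : ((n * n : ℕ) : ℝ) * (δ / (n : ℝ) ^ 2) = δ := by
              push_cast
              field_simp
            rw [this]
    have hGval : κP G = 1 - κP Gᶜ := by
      rw [← compl_compl G, prob_compl_eq_one_sub hGmeas.compl, compl_compl]
    rw [← hGdef] at *
    show ENNReal.ofReal (1 - δ) ≤ κP G
    rw [hGval]
    calc ENNReal.ofReal (1 - δ) = 1 - ENNReal.ofReal δ := by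
          rw [ENNReal.ofReal_sub _ hδ0.le, ENNReal.ofReal_one]
      _ ≤ 1 - κP Gᶜ := tsub_le_tsub_left hGc 1
end

section
/- Let (X,d) be a metric space, P ⊆ X a finite set, z ≥ 0, and y : P → ℝ with y_p ≥ 0 for all p ∈ P. Suppose that for every p ∈ P with y_p > 0 and every r > 0, Σ_{p' ∈ P, d(p,p') ≤ 2r} y_{p'} ≤ r + z. Then for every q ∈ P and every r > 0, Σ_{p' ∈ P, d(q,p') ≤ r} y_{p'} ≤ r + z. -/
open Finset
open scoped Classical

/-- half-tightness implies dual feasibility: let `y` be nonnegative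
dual variables on the finite point set `P` and `z ≥ 0`. If for every support point
`p ∈ P` (i.e. `y_p > 0`) and every `r > 0` we have
`Σ_{p' ∈ P, d(p,p') ≤ 2r} y_{p'} ≤ r + z` (no constraint is more than half-tight at
any support point), then every dual constraint holds: for every `q ∈ P` and `r > 0`,
`Σ_{p' ∈ P, d(q,p') ≤ r} y_{p'} ≤ r + z`. -/
theorem stmt_19 {X : Type*} [MetricSpace X] (P : Finset X) (z : ℝ) (hz : 0 ≤ z)
    (y : X → ℝ) (hy : ∀ p ∈ P, 0 ≤ y p)
    (hhalf : ∀ p ∈ P, 0 < y p → ∀ r : ℝ, 0 < r →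
      ∑ p' ∈ P.filter (fun p' => dist p p' ≤ 2 * r), y p' ≤ r + z) :
    ∀ q ∈ P, ∀ r : ℝ, 0 < r →
      ∑ p' ∈ P.filter (fun p' => dist q p' ≤ r), y p' ≤ r + z := by
  intro q hq r hr
  by_cases h : ∃ p ∈ P.filter (fun p' => dist q p' ≤ r), 0 < y p
  · obtain ⟨p, hpmem, hyp⟩ := h
    rw [mem_filter] at hpmem
    obtain ⟨hpP, hpq⟩ := hpmem
    have key := hhalf p hpP hyp r hr
    refine le_trans (Finset.sum_le_sum_of_subset_of_nonneg ?_ ?_) key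
    · intro x hx
      rw [mem_filter] at hx ⊢
      refine ⟨hx.1, ?_⟩
      calc dist p x ≤ dist p q + dist q x := dist_triangle _ _ _
        _ ≤ r + r := by rw [dist_comm]; exact add_le_add hpq hx.2
        _ = 2 * r := by ring
    · intro x hx _
      exact hy x (mem_filter.mp hx).1
  · push_neg at h
    have : ∑ p' ∈ P.filter (fun p' => dist q p' ≤ r), y p' ≤ 0 := by
      apply Finset.sum_nonpos
      intro x hx
      exact h x hx
    linarith
end
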